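/- Let e : Fin p → X and f : Fin q → X be associated principal bases of nonzero subspaces V and W, set m = min(p, q) and c_i = ⟪e i, f i⟫ (a nonnegative real) for i < m, and let Q be the orthogonal projection of X onto the orthogonal complement W⊥. Then det(Gram(Q ∘ e)) = ∏_{i < m} (1 − c_i²). Equivalently, the complementary Grassmann angle satisfies cos²Θ⊥_{V,W} = ∏_{i=1}^m sin²θ_i, where θ_i = arccos(c_i) are the principal angles between V and W. -/

import Mathlib

variable {𝕜 X : Type*} [RCLike 𝕜] [NormedAddCommGroup X] [InnerProductSpace 𝕜 X]
  [FiniteDimensional 𝕜 X]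

/-- Orthonormal families `e` spanning `V` and `f` spanning `W` are *associated principal bases*
of `V` and `W`: `⟪e i, f j⟫ = 0` whenever `i ≠ j`, and each `⟪e i, f i⟫` is a nonnegative real. -/
def IsPrincipalPair {𝕜 X : Type*} [RCLike 𝕜] [NormedAddCommGroup X] [InnerProductSpace 𝕜 X]
    {p q : ℕ} (V W : Submodule 𝕜 X) (e : Fin p → X) (f : Fin q → X) : Prop :=
  Orthonormal 𝕜 e ∧ Submodule.span 𝕜 (Set.range e) = V ∧
  Orthonormal 𝕜 f ∧ Submodule.span 𝕜 (Set.range f) = W ∧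
  (∀ (i : Fin p) (j : Fin q), (i : ℕ) ≠ (j : ℕ) → (inner 𝕜 (e i) (f j) : 𝕜) = 0) ∧
  (∀ (i : Fin p) (j : Fin q), (i : ℕ) = (j : ℕ) →
    ∃ c : ℝ, 0 ≤ c ∧ (inner 𝕜 (e i) (f j) : 𝕜) = (c : 𝕜))

theorem proj_principal {p q : ℕ} (W : Submodule 𝕜 X) (e : Fin p → X) (f : Fin q → X)
    (hf : Orthonormal 𝕜 f)
    (hfW : Submodule.span 𝕜 (Set.range f) = W)
    (h0 : ∀ (i : Fin p) (j : Fin q), (i : ℕ) ≠ (j : ℕ) → (inner 𝕜 (e i) (f j) : 𝕜) = 0)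
    (i : Fin p) (h : (i : ℕ) < q)
    (hreal : (starRingEnd 𝕜) (inner 𝕜 (e i) (f ⟨i, h⟩) : 𝕜) = inner 𝕜 (e i) (f ⟨i, h⟩)) :
    (W.orthogonalProjection (e i) : X) = (inner 𝕜 (e i) (f ⟨i, h⟩) : 𝕜) • f ⟨i, h⟩ := by
  refine Submodule.eq_starProjection_of_mem_of_inner_eq_zero ?_ ?_
  · rw [← hfW]
    exact Submodule.smul_mem _ _ (Submodule.subset_span ⟨_, rfl⟩)
  · intro w hw
    rw [← hfW] at hw
    have hff := orthonormal_iff_ite.mp hf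
    induction hw using Submodule.span_induction with
    | mem x hx =>
      obtain ⟨k, rfl⟩ := hx
      rw [inner_sub_left, inner_smul_left, hff, hreal]
      by_cases hk : (i : ℕ) = (k : ℕ)
      · have : (⟨(i : ℕ), h⟩ : Fin q) = k := Fin.ext (by simpa using hk)
        simp [this]
      · have : (⟨(i : ℕ), h⟩ : Fin q) ≠ k := by
          intro hc; exact hk (by simpa using congrArg Fin.val hc)
        rw [h0 i k hk, if_neg this, mul_zero, sub_zero]
    | zero => simp
    | add x y _ _ hx hy => rw [inner_add_right, hx, hy, add_zero]
    | smul a x _ hx => rw [inner_smul_right, hx, mul_zero]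

theorem proj_principal_zero {p q : ℕ} (W : Submodule 𝕜 X) (e : Fin p → X) (f : Fin q → X)
    (hfW : Submodule.span 𝕜 (Set.range f) = W)
    (h0 : ∀ (i : Fin p) (j : Fin q), (i : ℕ) ≠ (j : ℕ) → (inner 𝕜 (e i) (f j) : 𝕜) = 0)
    (i : Fin p) (h : ¬ (i : ℕ) < q) :
    (W.orthogonalProjection (e i) : X) = 0 := by
  refine Submodule.eq_starProjection_of_mem_of_inner_eq_zero (Submodule.zero_mem _) ?_
  intro w hw
  rw [← hfW] at hw
  induction hw using Submodule.span_induction with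
  | mem x hx =>
    obtain ⟨k, rfl⟩ := hx
    rw [sub_zero, h0 i k (by omega)]
  | zero => simp
  | add x y _ _ hx hy => rw [inner_add_right, hx, hy, add_zero]
  | smul a x _ hx => rw [inner_smul_right, hx, mul_zero]

/-- Let `e, f` be associated principal bases of nonzero subspaces `V, W`,
`m = min p q`, `cᵢ = ⟪e i, f i⟫` (nonnegative reals, the cosines of the principal angles), and
`Q` the orthogonal projection onto `Wᗮ`.  Then `det (Gram (Q ∘ e)) = ∏_{i < m} (1 - cᵢ²)`,
i.e. `cos² Θ⊥_{V,W} = ∏ᵢ sin² θᵢ`. -/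
theorem sq_cos_complementary_grassmann_eq_prod_sq_sin_principal {p q : ℕ}
    (V W : Submodule 𝕜 X) (hV : V ≠ ⊥) (hW : W ≠ ⊥)
    (e : Fin p → X) (f : Fin q → X) (hef : IsPrincipalPair V W e f) :
    (Matrix.of fun i j : Fin p =>
        (inner 𝕜 ((Wᗮ.orthogonalProjection (e i) : X))
               ((Wᗮ.orthogonalProjection (e j) : X)) : 𝕜)).det =
      ((∏ i : Fin (min p q),
          (1 - (RCLike.re (inner 𝕜 (e (Fin.castLE (min_le_left p q) i))
            (f (Fin.castLE (min_le_right p q) i)) : 𝕜)) ^ 2) : ℝ) : 𝕜) := by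
  obtain ⟨he, heV, hf, hfW, h0, h1⟩ := hef
  -- the diagonal entries come from real inner products
  have hreal : ∀ (i : Fin p) (h : (i : ℕ) < q),
      (inner 𝕜 (e i) (f ⟨i, h⟩) : 𝕜) = ((RCLike.re (inner 𝕜 (e i) (f ⟨i, h⟩) : 𝕜) : ℝ) : 𝕜) := by
    intro i h
    obtain ⟨c, _, hc⟩ := h1 i ⟨i, h⟩ rfl
    rw [hc, RCLike.ofReal_re]
  have hconj : ∀ (i : Fin p) (h : (i : ℕ) < q),
      (starRingEnd 𝕜) (inner 𝕜 (e i) (f ⟨i, h⟩) : 𝕜) = inner 𝕜 (e i) (f ⟨i, h⟩) := by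
    intro i h
    rw [hreal i h, RCLike.conj_ofReal]
  -- compute the projections onto W
  have hP : ∀ i : Fin p, (W.orthogonalProjection (e i) : X) =
      if h : (i : ℕ) < q then (inner 𝕜 (e i) (f ⟨i, h⟩) : 𝕜) • f ⟨i, h⟩ else 0 := by
    intro i
    by_cases h : (i : ℕ) < q
    · rw [dif_pos h]; exact proj_principal W e f hf hfW h0 i h (hconj i h)
    · rw [dif_neg h]; exact proj_principal_zero W e f hfW h0 i h
  set d : Fin p → 𝕜 := fun i =>
    if h : (i : ℕ) < q then ((1 - (RCLike.re (inner 𝕜 (e i) (f ⟨i, h⟩) : 𝕜)) ^ 2 : ℝ) : 𝕜) else 1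
    with hd
  have hee := orthonormal_iff_ite.mp he
  have hff := orthonormal_iff_ite.mp hf
  have hmat : (Matrix.of fun i j : Fin p =>
      (inner 𝕜 ((Wᗮ.orthogonalProjection (e i) : X))
             ((Wᗮ.orthogonalProjection (e j) : X)) : 𝕜)) = Matrix.diagonal d := by
    ext i j
    rw [Matrix.of_apply, Matrix.diagonal_apply]
    change inner 𝕜 (Wᗮ.starProjection (e i)) (Wᗮ.starProjection (e j)) = _
    rw [Submodule.starProjection_orthogonal_val, Submodule.starProjection_orthogonal_val,
      Submodule.starProjection_apply, Submodule.starProjection_apply, hP i, hP j]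
    by_cases hij : i = j
    · subst hij
      rw [if_pos rfl]
      simp only [hd]
      by_cases h : (i : ℕ) < q
      · simp only [dif_pos h]
        set c : ℝ := RCLike.re (inner 𝕜 (e i) (f ⟨i, h⟩) : 𝕜) with hcdef
        have hc : (inner 𝕜 (e i) (f ⟨i, h⟩) : 𝕜) = (c : 𝕜) := hreal i h
        have hcf : (inner 𝕜 (f ⟨i, h⟩) (e i) : 𝕜) = (c : 𝕜) := by
          rw [← inner_conj_symm, hc, RCLike.conj_ofReal]
        rw [inner_sub_sub_self, inner_smul_left, inner_smul_right, inner_smul_right,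
          inner_smul_left, hee, hff, if_pos rfl, if_pos rfl, hc, hcf, RCLike.conj_ofReal]
        push_cast
        ring
      · simp only [dif_neg h]
        rw [sub_zero, hee, if_pos rfl]
    · rw [if_neg hij]
      have hij' : (i : ℕ) ≠ (j : ℕ) := fun hc => hij (Fin.ext hc)
      rw [inner_sub_left, inner_sub_right, inner_sub_right, hee, if_neg hij]
      have h2 : (inner 𝕜 (e i) (if h : (j : ℕ) < q then
          (inner 𝕜 (e j) (f ⟨j, h⟩) : 𝕜) • f ⟨j, h⟩ else 0) : 𝕜) = 0 := by
        split
        · rw [inner_smul_right, h0 i _ (by simpa using hij'), mul_zero]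
        · exact inner_zero_right _
      have h3 : (inner 𝕜 (if h : (i : ℕ) < q then
          (inner 𝕜 (e i) (f ⟨i, h⟩) : 𝕜) • f ⟨i, h⟩ else 0) (e j) : 𝕜) = 0 := by
        split
        next h =>
          rw [inner_smul_left, show (inner 𝕜 (f ⟨(i : ℕ), h⟩) (e j) : 𝕜) = 0 from by
            rw [← inner_conj_symm, h0 j ⟨(i : ℕ), h⟩ (by simpa using hij'.symm), map_zero],
            mul_zero]
        next _ => exact inner_zero_left _
      have h4 : (inner 𝕜 (if h : (i : ℕ) < q then
          (inner 𝕜 (e i) (f ⟨i, h⟩) : 𝕜) • f ⟨i, h⟩ else 0)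
          (if h : (j : ℕ) < q then (inner 𝕜 (e j) (f ⟨j, h⟩) : 𝕜) • f ⟨j, h⟩ else 0) : 𝕜) = 0 := by
        split
        · split
          · rw [inner_smul_left, inner_smul_right, hff,
              if_neg (fun hc => hij' (by simpa using congrArg Fin.val hc))]
            ring
          · rw [inner_zero_right]
        · exact inner_zero_left _
      rw [h2, h3, h4]
      ring
  rw [hmat, Matrix.det_diagonal]
  -- now the product computation
  set D : ℕ → 𝕜 := fun n =>
    if h : n < p ∧ n < q then
      ((1 - (RCLike.re (inner 𝕜 (e ⟨n, h.1⟩) (f ⟨n, h.2⟩) : 𝕜)) ^ 2 : ℝ) : 𝕜) else 1 with hD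
  have hdD : ∀ i : Fin p, d i = D (i : ℕ) := by
    intro i
    simp only [hd, hD]
    by_cases h : (i : ℕ) < q
    · rw [dif_pos h, dif_pos (show (i:ℕ) < p ∧ (i:ℕ) < q from ⟨i.isLt, h⟩)]
    · rw [dif_neg h, dif_neg (show ¬((i:ℕ) < p ∧ (i:ℕ) < q) from fun hc => h hc.2)]
  have hL : ∏ i : Fin p, d i = ∏ n ∈ Finset.range p, D n := by
    rw [← Fin.prod_univ_eq_prod_range]
    exact Finset.prod_congr rfl fun i _ => hdD i
  have hR : ((∏ i : Fin (min p q),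
      (1 - (RCLike.re (inner 𝕜 (e (Fin.castLE (min_le_left p q) i))
        (f (Fin.castLE (min_le_right p q) i)) : 𝕜)) ^ 2 : ℝ) : ℝ) : 𝕜) =
      ∏ n ∈ Finset.range (min p q), D n := by
    rw [RCLike.ofReal_prod, ← Fin.prod_univ_eq_prod_range]
    refine Finset.prod_congr rfl fun i _ => ?_
    simp only [hD]
    rw [dif_pos (show (i:ℕ) < p ∧ (i:ℕ) < q from
      ⟨lt_of_lt_of_le i.isLt (min_le_left p q), lt_of_lt_of_le i.isLt (min_le_right p q)⟩)]
    rfl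
  rw [hL, hR]
  symm
  apply Finset.prod_subset (Finset.range_subset_range.mpr (min_le_left p q))
  intro n hn hn'
  simp only [Finset.mem_range] at hn hn'
  simp only [hD]
  rw [dif_neg]
  rintro ⟨hp', hq'⟩
  exact hn' (lt_min hp' hq')
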